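/- Let H be a real Hilbert space, let (u_n)_{n≥1} be an orthonormal family in H, and let (λ_n)_{n≥1} be nonnegative reals with λ_n ≤ c₁·exp(−c₂·√n) for all n ≥ 1, where c₁ ≥ 0 and c₂ > 0. Then for every integer N ≥ 1 the series ∑_{n=N+1}^∞ √λ_n · u_n converges in H and ‖∑_{n=N+1}^∞ √λ_n · u_n‖ ≤ √((2c₁/c₂²)·(1 + c₂·√N)) · exp(−(c₂/2)·√N). -/

import Mathlib

private lemma antideriv_hasDerivAt {c : ℝ} (hc : 0 < c) {x : ℝ} (hx : 0 < x) :
    HasDerivAt (fun y : ℝ => -(2 / c ^ 2) * ((1 + c * Real.sqrt y) * Real.exp (-c * Real.sqrt y)))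
      (Real.exp (-c * Real.sqrt x)) x := by
  have hsx : Real.sqrt x ≠ 0 := ne_of_gt (Real.sqrt_pos.mpr hx)
  have hs : HasDerivAt Real.sqrt (1 / (2 * Real.sqrt x)) x := Real.hasDerivAt_sqrt (ne_of_gt hx)
  have he : HasDerivAt (fun y => Real.exp (-c * Real.sqrt y))
      (Real.exp (-c * Real.sqrt x) * (-c * (1 / (2 * Real.sqrt x)))) x :=
    (hs.const_mul (-c)).exp
  have h1 : HasDerivAt (fun y : ℝ => 1 + c * Real.sqrt y) (c * (1 / (2 * Real.sqrt x))) x :=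
    (hs.const_mul c).const_add 1
  have h2 := (h1.mul he).const_mul (-(2 / c ^ 2))
  refine h2.congr_deriv ?_
  have hc' : c ≠ 0 := ne_of_gt hc
  field_simp
  ring_nf

private lemma tail_sum_le {c : ℝ} (hc : 0 < c) {N : ℕ} (hN : 1 ≤ N) (M : ℕ) :
    ∑ i ∈ Finset.range M, Real.exp (-c * Real.sqrt ((N : ℝ) + ((i : ℕ) + 1 : ℕ))) ≤
      2 / c ^ 2 * (1 + c * Real.sqrt N) * Real.exp (-c * Real.sqrt N) := by
  set f : ℝ → ℝ := fun x => Real.exp (-c * Real.sqrt x) with hf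
  have hanti : AntitoneOn f (Set.Icc (N : ℝ) ((N : ℝ) + M)) := by
    intro a ha b hb hab
    have : Real.sqrt a ≤ Real.sqrt b := Real.sqrt_le_sqrt hab
    exact Real.exp_le_exp.mpr (by nlinarith)
  have h1 := hanti.sum_le_integral
  have hN0 : (0 : ℝ) < N := by exact_mod_cast Nat.pos_of_ne_zero (by omega)
  have hcont : Continuous f := Real.continuous_exp.comp (continuous_const.mul Real.continuous_sqrt)
  have hle : (N : ℝ) ≤ (N : ℝ) + M := le_add_of_nonneg_right (Nat.cast_nonneg M)
  have hderiv : ∀ x ∈ Set.uIcc (N : ℝ) ((N : ℝ) + M),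
      HasDerivAt (fun y : ℝ => -(2 / c ^ 2) * ((1 + c * Real.sqrt y) * Real.exp (-c * Real.sqrt y)))
        (f x) x := by
    intro x hx
    rw [Set.uIcc_of_le hle] at hx
    exact antideriv_hasDerivAt hc (lt_of_lt_of_le hN0 hx.1)
  have heq := intervalIntegral.integral_eq_sub_of_hasDerivAt hderiv
    (hcont.intervalIntegrable _ _)
  have hg2 : -(2 / c ^ 2) * ((1 + c * Real.sqrt ((N : ℝ) + M)) *
      Real.exp (-c * Real.sqrt ((N : ℝ) + M))) ≤ 0 := by
    have h3 : (0:ℝ) ≤ Real.sqrt ((N : ℝ) + M) := Real.sqrt_nonneg _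
    have h4 : (0:ℝ) < Real.exp (-c * Real.sqrt ((N : ℝ) + M)) := Real.exp_pos _
    have h5 : (0:ℝ) < 2 / c ^ 2 := by positivity
    have h6 : (0:ℝ) ≤ 1 + c * Real.sqrt ((N : ℝ) + M) := by nlinarith
    nlinarith [mul_nonneg h5.le (mul_nonneg h6 h4.le)]
  calc ∑ i ∈ Finset.range M, Real.exp (-c * Real.sqrt ((N : ℝ) + ((i : ℕ) + 1 : ℕ)))
      ≤ ∫ x in (N : ℝ)..(N : ℝ) + M, f x := h1
    _ ≤ 2 / c ^ 2 * (1 + c * Real.sqrt N) * Real.exp (-c * Real.sqrt N) := by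
        rw [heq]; nlinarith [hg2]

theorem stmt3 {H : Type*} [NormedAddCommGroup H] [InnerProductSpace ℝ H] [CompleteSpace H]
    (u : ℕ → H) (hu : Orthonormal ℝ (fun n : {n : ℕ // 1 ≤ n} => u n))
    (lam : ℕ → ℝ) (c₁ c₂ : ℝ) (hc₁ : 0 ≤ c₁) (hc₂ : 0 < c₂)
    (hlam : ∀ n : ℕ, 1 ≤ n →
      0 ≤ lam n ∧ lam n ≤ c₁ * Real.exp (-c₂ * Real.sqrt n)) :
    ∀ N : ℕ, 1 ≤ N →
      Summable (fun n : ℕ => Real.sqrt (lam (n + (N + 1))) • u (n + (N + 1))) ∧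
      ‖∑' n : ℕ, Real.sqrt (lam (n + (N + 1))) • u (n + (N + 1))‖ ≤
        Real.sqrt ((2 * c₁ / c₂ ^ 2) * (1 + c₂ * Real.sqrt N)) *
          Real.exp (-(c₂ / 2) * Real.sqrt N) := by
  intro N hN
  set B : ℝ := (2 * c₁ / c₂ ^ 2) * (1 + c₂ * Real.sqrt N) * Real.exp (-c₂ * Real.sqrt N) with hB
  set a : ℕ → ℝ := fun n => Real.sqrt (lam (n + (N + 1))) with ha
  -- orthonormality of the shifted family
  have hinj : Function.Injective (fun n : ℕ => (⟨n + (N + 1), by omega⟩ : {n : ℕ // 1 ≤ n})) := by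
    intro m n h
    simpa [Subtype.ext_iff] using h
  have hv : Orthonormal ℝ (fun n : ℕ => u (n + (N + 1))) :=
    hu.comp (fun n : ℕ => (⟨n + (N + 1), by omega⟩ : {n : ℕ // 1 ≤ n})) hinj
  have hOF := hv.orthogonalFamily
  -- scalar facts
  have hasq : ∀ n : ℕ, ‖a n‖ ^ 2 = lam (n + (N + 1)) := by
    intro n
    rw [Real.norm_eq_abs, sq_abs, Real.sq_sqrt (hlam _ (by omega)).1]
  have hsum_range : ∀ M : ℕ, ∑ n ∈ Finset.range M, ‖a n‖ ^ 2 ≤ B := by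
    intro M
    have h1 : ∑ n ∈ Finset.range M, ‖a n‖ ^ 2 ≤
        ∑ n ∈ Finset.range M, c₁ * Real.exp (-c₂ * Real.sqrt ((N : ℝ) + ((n : ℕ) + 1 : ℕ))) := by
      apply Finset.sum_le_sum
      intro n _
      rw [hasq]
      have := (hlam (n + (N + 1)) (by omega)).2
      refine this.trans_eq ?_
      push_cast; ring_nf
    rw [← Finset.mul_sum] at h1
    have h2 := tail_sum_le hc₂ hN M
    calc ∑ n ∈ Finset.range M, ‖a n‖ ^ 2
        ≤ c₁ * ∑ n ∈ Finset.range M, Real.exp (-c₂ * Real.sqrt ((N : ℝ) + ((n : ℕ) + 1 : ℕ))) := h1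
      _ ≤ c₁ * (2 / c₂ ^ 2 * (1 + c₂ * Real.sqrt N) * Real.exp (-c₂ * Real.sqrt N)) :=
          mul_le_mul_of_nonneg_left h2 hc₁
      _ = B := by rw [hB]; ring
  have hsq_summable : Summable (fun n => ‖a n‖ ^ 2) :=
    summable_of_sum_range_le (fun n => by positivity) hsum_range
  have hsummable : Summable (fun n : ℕ => a n • u (n + (N + 1))) := by
    have := (hOF.summable_iff_norm_sq_summable a).mpr hsq_summable
    simpa [LinearIsometry.toSpanSingleton_apply] using this
  refine ⟨hsummable, ?_⟩
  set S : H := ∑' n : ℕ, a n • u (n + (N + 1)) with hS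
  have hHasSum : HasSum (fun n : ℕ => a n • u (n + (N + 1))) S := hsummable.hasSum
  -- ‖S‖^2 is the sum of the squares
  have hsq : HasSum (fun n => ‖a n‖ ^ 2) (‖S‖ ^ 2) := by
    have hT : Filter.Tendsto (fun s : Finset ℕ => ‖∑ n ∈ s, a n • u (n + (N + 1))‖ ^ 2)
        Filter.atTop (nhds (‖S‖ ^ 2)) :=
      ((continuous_norm.pow 2).continuousAt).tendsto.comp hHasSum
    have heq : ∀ s : Finset ℕ, ‖∑ n ∈ s, a n • u (n + (N + 1))‖ ^ 2 = ∑ n ∈ s, ‖a n‖ ^ 2 := by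
      intro s
      have := hOF.norm_sum a s
      simpa [LinearIsometry.toSpanSingleton_apply] using this
    rw [HasSum]
    exact hT.congr (fun s => heq s)
  have hnorm_sq_le : ‖S‖ ^ 2 ≤ B := by
    rw [← hsq.tsum_eq]
    exact hsq_summable.tsum_le_of_sum_range_le hsum_range
  have hBsqrt : Real.sqrt B = Real.sqrt ((2 * c₁ / c₂ ^ 2) * (1 + c₂ * Real.sqrt N)) *
      Real.exp (-(c₂ / 2) * Real.sqrt N) := by
    rw [hB, Real.sqrt_mul (by positivity)]
    congr 1
    rw [← Real.exp_half]
    congr 1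
    ring
  calc ‖S‖ = Real.sqrt (‖S‖ ^ 2) := by rw [Real.sqrt_sq (norm_nonneg _)]
    _ ≤ Real.sqrt B := Real.sqrt_le_sqrt hnorm_sq_le
    _ = _ := hBsqrt
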